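/- arXiv:2307.03181 — 2 statements merged into one kernel-verified Lean document; each statement's English description precedes it below -/
import Mathlib

section
/- Let Ω be a finite set, π a probability distribution on Ω × A for finite A, and suppose π satisfies the balance equations for a Markov kernel p: for all ω, ∑_{ω',a'} π(ω',a') p(ω | ω',a') = ∑_a π(ω,a). Define σ(a|ω) = π(ω,a)/∑_{a'} π(ω,a') whenever the denominator is positive. Then the marginal π̂(ω,a) := π(ω,a) is an invariant distribution of the Markov chain on Ω × A with transition probability P((ω,a) → (ω',a')) = p(ω'|ω,a)·σ(a'|ω'). -/
/-- If π satisfies the balance equations for kernel p, then π̂ = π is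
invariant for the chain on Ω × A with transition p(ω'|ω,a)·σ(a'|ω'), where
σ(a|ω) = π(ω,a)/∑_{a'} π(ω,a') whenever the denominator is positive. -/
theorem stmt_0 {Ω A : Type*} [Fintype Ω] [Fintype A] [Nonempty Ω] [Nonempty A]
    (p : Ω → A → Ω → ℝ) (π : Ω → A → ℝ)
    (hp0 : ∀ ω a ω', 0 ≤ p ω a ω') (hp1 : ∀ ω a, ∑ ω', p ω a ω' = 1)
    (hπ0 : ∀ ω a, 0 ≤ π ω a) (hπ1 : ∑ ω, ∑ a, π ω a = 1)
    (hbal : ∀ ω, ∑ ω', ∑ a', π ω' a' * p ω' a' ω = ∑ a, π ω a) :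
    ∀ ω a, 0 < ∑ a', π ω a' →
      ∑ ω', ∑ a', π ω' a' * p ω' a' ω * (π ω a / ∑ a'', π ω a'') = π ω a := by
  intro ω a hpos
  have h : ∑ ω', ∑ a', π ω' a' * p ω' a' ω * (π ω a / ∑ a'', π ω a'')
      = (∑ ω', ∑ a', π ω' a' * p ω' a' ω) * (π ω a / ∑ a'', π ω a'') := by
    rw [Finset.sum_mul]
    exact Finset.sum_congr rfl fun ω' _ => (Finset.sum_mul ..).symm
  rw [h, hbal ω, mul_div_cancel₀ _ hpos.ne']
end

section
/- (Continuity of Bayes' update) Let Ω be a finite set, χ : Ω → [0,1] a function (signaling probability), and π, π' ∈ Δ(Ω) with ∑_ω π(ω)χ(ω) > 0 and ∑_ω π'(ω)χ(ω) > 0. Define the posteriors ξ(ω) = π(ω)χ(ω)/∑_{ω'}π(ω')χ(ω') and ξ'(ω) = π'(ω)χ(ω)/∑_{ω'}π'(ω')χ(ω'). Then ‖ξ' − ξ‖₁ ≤ 2·(sup_{ω∈Ω} ξ(ω)/π(ω))·‖π' − π‖₁, where the sup is over ω with π(ω) > 0 (and finite by convention when ξ(ω)=0 whenever π(ω)=0).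 -/
/-- Continuity of Bayes' update: the ℓ₁ distance between the posteriors
is at most 2·(sup_ω χ(ω)/∑_{ω'} π(ω')χ(ω'))·‖π' − π‖₁, where the supremum expression
equals sup_{ω ∈ supp π} ξ(ω)/π(ω). -/
theorem stmt_4 {Ω : Type*} [Fintype Ω] [Nonempty Ω]
    (χ : Ω → ℝ) (π π' : Ω → ℝ)
    (hχ : ∀ ω, 0 ≤ χ ω ∧ χ ω ≤ 1)
    (hπ0 : ∀ ω, 0 ≤ π ω) (hπ1 : ∑ ω, π ω = 1)
    (hπ'0 : ∀ ω, 0 ≤ π' ω) (hπ'1 : ∑ ω, π' ω = 1)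
    (hD : 0 < ∑ ω, π ω * χ ω) (hD' : 0 < ∑ ω, π' ω * χ ω)
    (hsupp : ∀ ω, π ω = 0 → π' ω * χ ω = 0) :
    ∑ ω, |π' ω * χ ω / (∑ ω', π' ω' * χ ω') - π ω * χ ω / (∑ ω', π ω' * χ ω')|
      ≤ 2 * (Finset.univ.sup' Finset.univ_nonempty
               (fun ω => χ ω / ∑ ω', π ω' * χ ω'))
          * ∑ ω, |π' ω - π ω| := by
  set D := ∑ ω, π ω * χ ω with hDdef
  set D' := ∑ ω, π' ω * χ ω with hD'def
  set M := Finset.univ.sup' Finset.univ_nonempty (fun ω => χ ω / D) with hMdef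
  have hMle : ∀ ω : Ω, χ ω / D ≤ M := fun ω =>
    Finset.le_sup' (fun ω => χ ω / D) (Finset.mem_univ ω)
  -- pointwise bound
  have key : ∀ ω : Ω, |π' ω * χ ω / D' - π ω * χ ω / D| ≤
      |π' ω - π ω| * (χ ω / D) + π' ω * χ ω * |1/D' - 1/D| := by
    intro ω
    have heq : π' ω * χ ω / D' - π ω * χ ω / D
        = (π' ω - π ω) * (χ ω / D) + (π' ω * χ ω) * (1/D' - 1/D) := by
      field_simp
      ring
    rw [heq]
    refine (abs_add_le _ _).trans ?_
    rw [abs_mul, abs_mul]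
    gcongr
    · exact le_of_eq (abs_of_nonneg (div_nonneg (hχ ω).1 hD.le))
    · exact le_of_eq (abs_of_nonneg (mul_nonneg (hπ'0 ω) (hχ ω).1))
  have sum1 : ∑ ω, |π' ω * χ ω / D' - π ω * χ ω / D| ≤
      (∑ ω, |π' ω - π ω| * (χ ω / D)) + D' * |1/D' - 1/D| := by
    calc ∑ ω, |π' ω * χ ω / D' - π ω * χ ω / D|
        ≤ ∑ ω, (|π' ω - π ω| * (χ ω / D) + π' ω * χ ω * |1/D' - 1/D|) :=
          Finset.sum_le_sum fun ω _ => key ω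
      _ = (∑ ω, |π' ω - π ω| * (χ ω / D)) + (∑ ω, π' ω * χ ω) * |1/D' - 1/D| := by
          rw [Finset.sum_add_distrib, Finset.sum_mul]
      _ = _ := by rw [← hD'def]
  have habsD : D' * |1/D' - 1/D| ≤ ∑ ω, |π' ω - π ω| * (χ ω / D) := by
    have h1 : D' * |1/D' - 1/D| = |D - D'| / D := by
      have e1 : D' * (1/D' - 1/D) = (D - D') / D := by field_simp
      calc D' * |1/D' - 1/D| = |D' * (1/D' - 1/D)| := by
            rw [abs_mul, abs_of_pos hD']
        _ = |D - D'| / D := by rw [e1, abs_div, abs_of_pos hD]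
    rw [h1]
    have h2 : |D - D'| ≤ ∑ ω, |π' ω - π ω| * χ ω := by
      have : D - D' = ∑ ω, (π ω - π' ω) * χ ω := by
        rw [hDdef, hD'def, ← Finset.sum_sub_distrib]; congr 1; ext ω; ring
      rw [this]
      refine (Finset.abs_sum_le_sum_abs _ _).trans ?_
      refine Finset.sum_le_sum fun ω _ => ?_
      rw [abs_mul, abs_sub_comm, abs_of_nonneg (hχ ω).1]
    calc |D - D'| / D ≤ (∑ ω, |π' ω - π ω| * χ ω) / D := by gcongr
      _ = ∑ ω, |π' ω - π ω| * (χ ω / D) := by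
          rw [Finset.sum_div]; congr 1; ext ω; ring
  have sum2 : ∑ ω, |π' ω - π ω| * (χ ω / D) ≤ M * ∑ ω, |π' ω - π ω| := by
    rw [Finset.mul_sum]
    refine Finset.sum_le_sum fun ω _ => ?_
    rw [mul_comm M]
    exact mul_le_mul_of_nonneg_left (hMle ω) (abs_nonneg _)
  calc ∑ ω, |π' ω * χ ω / D' - π ω * χ ω / D|
      ≤ (∑ ω, |π' ω - π ω| * (χ ω / D)) + D' * |1/D' - 1/D| := sum1
    _ ≤ (M * ∑ ω, |π' ω - π ω|) + (M * ∑ ω, |π' ω - π ω|) :=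
        add_le_add sum2 (habsD.trans sum2)
    _ = 2 * M * ∑ ω, |π' ω - π ω| := by ring
end
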